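/- Let (f, τ, c) be degree −2 branched covering data and let X ⊆ ℂ be a continuum with f(X) = X. If A ⊆ X is a dense G_δ subset of the space X (with its subspace topology), then f(A) is not a first category (meagre) subset of X. -/

import Mathlib

open Set Topology

/-- A continuum: a nonempty compact connected subset of ℂ. -/
def IsContinuum (K : Set ℂ) : Prop := IsCompact K ∧ IsConnected K

/-- The preimage of a nowhere dense set under a continuous open map is nowhere dense. -/
lemma isNowhereDense_preimage_of_open {α β : Type*} [TopologicalSpace α] [TopologicalSpace β]
    {g : α → β} (hc : Continuous g) (ho : IsOpenMap g) {s : Set β}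
    (hs : IsNowhereDense s) : IsNowhereDense (g ⁻¹' s) := by
  rw [IsNowhereDense, eq_empty_iff_forall_notMem]
  intro x hx
  have h1 : closure (g ⁻¹' s) ⊆ g ⁻¹' (closure s) := hc.closure_preimage_subset s
  have h2 : x ∈ interior (g ⁻¹' (closure s)) := interior_mono h1 hx
  have h3 : g '' interior (g ⁻¹' (closure s)) ⊆ closure s :=
    (Set.image_mono interior_subset).trans (Set.image_preimage_subset _ _)
  have h4 : g x ∈ interior (closure s) :=
    interior_maximal h3 (ho _ isOpen_interior) ⟨x, h2, rfl⟩
  rw [hs] at h4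
  exact h4

/-- The preimage of a meagre set under a continuous open map is meagre. -/
lemma isMeagre_preimage_of_open {α β : Type*} [TopologicalSpace α] [TopologicalSpace β]
    {g : α → β} (hc : Continuous g) (ho : IsOpenMap g) {s : Set β}
    (hs : IsMeagre s) : IsMeagre (g ⁻¹' s) := by
  rw [isMeagre_iff_countable_union_isNowhereDense] at hs ⊢
  obtain ⟨S, hS, hSc, hsub⟩ := hs
  refine ⟨(fun t => g ⁻¹' t) '' S, ?_, hSc.image _, ?_⟩
  · rintro t ⟨u, hu, rfl⟩
    exact isNowhereDense_preimage_of_open hc ho (hS u hu)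
  · intro x hx
    obtain ⟨u, hu, hxu⟩ := hsub hx
    exact ⟨g ⁻¹' u, ⟨u, hu, rfl⟩, hxu⟩

/-- The image of a nowhere dense set under a continuous injective open map is nowhere dense. -/
lemma isNowhereDense_image_of_open {α β : Type*} [TopologicalSpace α] [TopologicalSpace β]
    {g : α → β} (hc : Continuous g) (ho : IsOpenMap g) (hi : Function.Injective g)
    {s : Set α} (hs : IsNowhereDense s) : IsNowhereDense (g '' s) := by
  rw [IsNowhereDense, eq_empty_iff_forall_notMem]
  intro y hy
  set U := interior (closure (g '' s)) with hUdef
  have hUopen : IsOpen U := isOpen_interior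
  have hycl : y ∈ closure (g '' s) := interior_subset hy
  obtain ⟨z, hzU, a, haS, haz⟩ := mem_closure_iff.mp hycl U hUopen hy
  -- z = g a with a ∈ s and z ∈ U
  have hWopen : IsOpen (g ⁻¹' U) := hUopen.preimage hc
  have hWsub : g ⁻¹' U ⊆ closure s := by
    intro x hx
    rw [mem_closure_iff]
    intro O hO hxO
    have hgx : g x ∈ closure (g '' s) := interior_subset hx
    have h1 : g x ∈ g '' O := ⟨x, hxO, rfl⟩
    have h3 := mem_closure_iff.mp hgx (g '' O) (ho O hO) h1
    obtain ⟨w, ⟨o', ho', rfl⟩, b, hb, hba⟩ := h3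
    have hbo : b = o' := hi hba
    exact ⟨o', ho', hbo ▸ hb⟩
  have haW : a ∈ g ⁻¹' U := by
    rw [Set.mem_preimage, haz]
    exact hzU
  have : a ∈ interior (closure s) := interior_maximal hWsub hWopen haW
  rw [hs] at this
  exact this

/-- The image of a meagre set under a continuous injective open map is meagre. -/
lemma isMeagre_image_of_open {α β : Type*} [TopologicalSpace α] [TopologicalSpace β]
    {g : α → β} (hc : Continuous g) (ho : IsOpenMap g) (hi : Function.Injective g)
    {s : Set α} (hs : IsMeagre s) : IsMeagre (g '' s) := by
  rw [isMeagre_iff_countable_union_isNowhereDense] at hs ⊢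
  obtain ⟨S, hS, hSc, hsub⟩ := hs
  refine ⟨(fun t => g '' t) '' S, ?_, hSc.image _, ?_⟩
  · rintro t ⟨u, hu, rfl⟩
    exact isNowhereDense_image_of_open hc ho hi (hS u hu)
  · rintro y ⟨x, hx, rfl⟩
    obtain ⟨u, hu, hxu⟩ := hsub hx
    exact ⟨g '' u, ⟨u, hu, rfl⟩, ⟨x, hxu, rfl⟩⟩

theorem image_of_dense_Gdelta_not_meagre
    (f τ : ℂ → ℂ) (c : ℂ)
    (hf : Continuous f) (hopen : IsOpenMap f)
    (hperfect : ∀ K : Set ℂ, IsCompact K → IsCompact (f ⁻¹' K))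
    (hτ : Continuous τ) (hττ : ∀ x, τ (τ x) = x) (hfτ : ∀ x, f (τ x) = f x)
    (hfib : ∀ x y, f x = f y → y = x ∨ y = τ x)
    (hc : τ c = c) (hcuniq : ∀ x, τ x = x → x = c)
    (X : Set ℂ) (hX : IsContinuum X) (hfX : f '' X = X)
    (A : Set ℂ) (hA : A ⊆ X)
    (hGdelta : IsGδ (Subtype.val ⁻¹' A : Set X))
    (hdense : Dense (Subtype.val ⁻¹' A : Set X)) :
    ¬ IsMeagre (Subtype.val ⁻¹' (f '' A) : Set X) := by
  intro hmeagre
  have hXc : IsCompact X := hX.1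
  have hXne : X.Nonempty := hX.2.1
  haveI : CompactSpace ↥X := isCompact_iff_compactSpace.mp hXc
  set Y : Set ℂ := f ⁻¹' X with hYdef
  have hXY : X ⊆ Y := by
    intro x hx
    have : f x ∈ f '' X := ⟨x, hx, rfl⟩
    rw [hfX] at this
    exact this
  -- the induced map F : Y → X
  let F : ↥Y → ↥X := fun y => ⟨f y.1, y.2⟩
  have hFc : Continuous F := Continuous.subtype_mk (hf.comp continuous_subtype_val) _
  have hFo : IsOpenMap F := by
    intro U hU
    rw [isOpen_induced_iff] at hU ⊢
    obtain ⟨O, hO, rfl⟩ := hU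
    refine ⟨f '' O, hopen O hO, ?_⟩
    apply Set.Subset.antisymm
    · intro x hx
      obtain ⟨u, huO, hux⟩ := hx
      have huY : u ∈ Y := show f u ∈ X by rw [hux]; exact x.2
      exact ⟨⟨u, huY⟩, huO, Subtype.ext hux⟩
    · rintro x ⟨u, huO, rfl⟩
      exact ⟨u.1, huO, rfl⟩
  -- A, viewed inside Y, is meagre
  have h1 : IsMeagre (F ⁻¹' (Subtype.val ⁻¹' (f '' A) : Set ↥X)) :=
    isMeagre_preimage_of_open hFc hFo hmeagre
  have h2 : IsMeagre (Subtype.val ⁻¹' A : Set ↥Y) := by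
    refine h1.mono ?_
    intro a ha
    exact ⟨a.1, ha, rfl⟩
  -- find an open set O with O ∩ Y ⊆ X and O ∩ X nonempty
  have hkey : ∃ O : Set ℂ, IsOpen O ∧ O ∩ Y ⊆ X ∧ (O ∩ X).Nonempty := by
    by_cases hcase : τ '' X ⊆ X
    · refine ⟨Set.univ, isOpen_univ, ?_, by simpa using hXne⟩
      rintro y ⟨-, hy⟩
      have hfy : f y ∈ f '' X := by rw [hfX]; exact hy
      obtain ⟨x, hxX, hxy⟩ := hfy
      rcases hfib x y hxy with h | h
      · rwa [h]
      · rw [h]; exact hcase ⟨x, hxX, rfl⟩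
    · obtain ⟨z, hz, hzX⟩ := Set.not_subset.mp hcase
      obtain ⟨x₀, hx₀X, hx₀z⟩ := hz
      refine ⟨(τ '' X)ᶜ, (hXc.image hτ).isClosed.isOpen_compl, ?_, ⟨x₀, ?_, hx₀X⟩⟩
      · rintro y ⟨hyO, hyY⟩
        have hfy : f y ∈ f '' X := by rw [hfX]; exact hyY
        obtain ⟨x, hxX, hxy⟩ := hfy
        rcases hfib x y hxy with h | h
        · rwa [h]
        · exact absurd ⟨x, hxX, h.symm⟩ hyO
      · rintro ⟨w, hwX, hwx⟩
        apply hzX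
        rw [← hx₀z, ← hwx, hττ]
        exact hwX
  obtain ⟨O, hO, hOYX, hOXne⟩ := hkey
  set V : Set ℂ := O ∩ X with hVdef
  have hVX : V ⊆ X := Set.inter_subset_right
  have hVY : V ⊆ Y := hVX.trans hXY
  have hVeq : O ∩ Y = V := by
    apply Set.Subset.antisymm
    · intro y hy
      exact ⟨hy.1, hOYX hy⟩
    · intro v hv
      exact ⟨hv.1, hXY hv.2⟩
  -- inclusion maps
  let k : ↥V → ↥Y := Set.inclusion hVY
  let m : ↥V → ↥X := Set.inclusion hVX
  have hkc : Continuous k := continuous_inclusion hVY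
  have hmc : Continuous m := continuous_inclusion hVX
  have hki : Function.Injective k := Set.inclusion_injective hVY
  have hmi : Function.Injective m := Set.inclusion_injective hVX
  have hko : IsOpenMap k := by
    intro U hU
    rw [isOpen_induced_iff] at hU ⊢
    obtain ⟨O', hO', rfl⟩ := hU
    refine ⟨O' ∩ O, hO'.inter hO, ?_⟩
    apply Set.Subset.antisymm
    · rintro y ⟨hyO', hyO⟩
      have hyV : (y : ℂ) ∈ V := hVeq ▸ (⟨hyO, y.2⟩ : (y : ℂ) ∈ O ∩ Y)
      exact ⟨⟨y.1, hyV⟩, hyO', Subtype.ext rfl⟩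
    · rintro y ⟨v, hvO', rfl⟩
      have hv : (v : ℂ) ∈ O ∩ X := v.2
      exact ⟨hvO', hv.1⟩
  have hmo : IsOpenMap m := by
    intro U hU
    rw [isOpen_induced_iff] at hU ⊢
    obtain ⟨O', hO', rfl⟩ := hU
    refine ⟨O' ∩ O, hO'.inter hO, ?_⟩
    apply Set.Subset.antisymm
    · rintro x ⟨hxO', hxO⟩
      have hxV : (x : ℂ) ∈ V := ⟨hxO, x.2⟩
      exact ⟨⟨x.1, hxV⟩, hxO', Subtype.ext rfl⟩
    · rintro x ⟨v, hvO', rfl⟩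
      have hv : (v : ℂ) ∈ O ∩ X := v.2
      exact ⟨hvO', hv.1⟩
  -- transfer meagreness from Y to X through V
  have h3 : IsMeagre (Subtype.val ⁻¹' A : Set ↥V) := by
    have := isMeagre_preimage_of_open hkc hko h2
    convert this using 1
    rfl
  have h4 : IsMeagre (m '' (Subtype.val ⁻¹' A : Set ↥V)) :=
    isMeagre_image_of_open hmc hmo hmi h3
  have h5 : IsMeagre (Subtype.val ⁻¹' (A ∩ V) : Set ↥X) := by
    refine h4.mono ?_
    rintro x ⟨hxA, hxV⟩
    exact ⟨⟨x.1, hxV⟩, hxA, Subtype.ext rfl⟩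
  -- Baire category contradiction
  have hres : (Subtype.val ⁻¹' A : Set ↥X) ∈ residual ↥X :=
    residual_of_dense_Gδ hGdelta hdense
  have hres2 : ((Subtype.val ⁻¹' (A ∩ V) : Set ↥X))ᶜ ∈ residual ↥X := h5
  have hdense2 : Dense ((Subtype.val ⁻¹' A : Set ↥X) ∩ (Subtype.val ⁻¹' (A ∩ V))ᶜ) :=
    dense_of_mem_residual (Filter.inter_mem hres hres2)
  have hsub : ((Subtype.val ⁻¹' A : Set ↥X) ∩ (Subtype.val ⁻¹' (A ∩ V))ᶜ) ⊆
      ((Subtype.val ⁻¹' O : Set ↥X))ᶜ := by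
    rintro x ⟨hxA, hxc⟩ hxO
    exact hxc ⟨hxA, hxO, x.2⟩
  have hdense3 : Dense ((Subtype.val ⁻¹' O : Set ↥X))ᶜ := hdense2.mono hsub
  have hclosed : IsClosed ((Subtype.val ⁻¹' O : Set ↥X))ᶜ :=
    (hO.preimage continuous_subtype_val).isClosed_compl
  have huniv : ((Subtype.val ⁻¹' O : Set ↥X))ᶜ = Set.univ := by
    rw [← hclosed.closure_eq]
    exact hdense3.closure_eq
  obtain ⟨v, hvO, hvX⟩ := hOXne
  have : (⟨v, hvX⟩ : ↥X) ∈ ((Subtype.val ⁻¹' O : Set ↥X))ᶜ := huniv ▸ Set.mem_univ _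
  exact this hvO
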